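/- Let N ≥ 1, let α ∈ (0,1), and let T : ℝ^N → ℝ^N be an α-averaged operator with Fix T ≠ ∅. Let (γ_k)_{k≥0} be a real sequence with 0 ≤ γ_k ≤ γ̄ < 1 for all k, for some constant γ̄. Let (x_k) be defined by x_{−1} = x₀ ∈ ℝ^N and x_{k+1} = T(x_k + γ_k·(x_k − x_{k−1})). If in addition Σ_{k≥1} γ_k·‖x_k − x_{k−1}‖² < ∞, then (x_k) converges to a point of Fix T. -/

import Mathlib

open Filter Topology


lemma aux_summable_rec (c : ℝ) (hc0 : 0 ≤ c) (hc1 : c < 1) (θ δ : ℕ → ℝ)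
    (hθ : ∀ k, 0 ≤ θ k) (hδ : ∀ k, 0 ≤ δ k) (hδsum : Summable δ)
    (hrec : ∀ k, θ (k + 1) ≤ c * θ k + δ k) : Summable θ := by
  have hD : ∀ n, ∑ k ∈ Finset.range n, δ k ≤ ∑' k, δ k :=
    fun n => Summable.sum_le_tsum _ (fun i _ => hδ i) hδsum
  have hDnn : 0 ≤ ∑' k, δ k := tsum_nonneg hδ
  have h1c : 0 < 1 - c := by linarith
  have hS : ∀ n, ∑ k ∈ Finset.range n, θ k ≤ (θ 0 + ∑' k, δ k) / (1 - c) := by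
    intro n
    cases n with
    | zero => simp; exact div_nonneg (by linarith [hθ 0, hDnn]) h1c.le
    | succ n =>
      have e1 : ∑ k ∈ Finset.range (n+1), θ k
          = (∑ k ∈ Finset.range n, θ (k+1)) + θ 0 := Finset.sum_range_succ' θ n
      have e2 : ∑ k ∈ Finset.range n, θ (k+1)
          ≤ c * (∑ k ∈ Finset.range n, θ k) + ∑ k ∈ Finset.range n, δ k := by
        calc ∑ k ∈ Finset.range n, θ (k+1) ≤ ∑ k ∈ Finset.range n, (c * θ k + δ k) :=
              Finset.sum_le_sum (fun i _ => hrec i)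
          _ = c * (∑ k ∈ Finset.range n, θ k) + ∑ k ∈ Finset.range n, δ k := by
              rw [Finset.sum_add_distrib, Finset.mul_sum]
      have e3 : ∑ k ∈ Finset.range n, θ k ≤ ∑ k ∈ Finset.range (n+1), θ k := by
        rw [Finset.sum_range_succ]; linarith [hθ n]
      have e4 : (1 - c) * (∑ k ∈ Finset.range (n+1), θ k) ≤ θ 0 + ∑' k, δ k := by
        nlinarith [hD n]
      rw [le_div_iff₀ h1c]; linarith [e4]
  exact summable_of_sum_range_le hθ hS

lemma aux_tendsto_of_diff (φ θ : ℕ → ℝ) (hφ : ∀ k, 0 ≤ φ k) (hθ : ∀ k, 0 ≤ θ k)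
    (hd : ∀ k, φ (k+1) - φ k ≤ θ k) (hsum : Summable θ) :
    ∃ L, Tendsto φ atTop (𝓝 L) := by
  set S : ℕ → ℝ := fun n => ∑ k ∈ Finset.range n, θ k with hSdef
  have hanti : Antitone (fun n => φ n - S n) := antitone_nat_of_succ_le (fun n => by
    have h := hd n
    have : S (n+1) = S n + θ n := by simp [hSdef, Finset.sum_range_succ]
    simp only [this]; linarith)
  have hbdd : BddBelow (Set.range fun n => φ n - S n) := by
    refine ⟨-∑' k, θ k, ?_⟩
    rintro v ⟨n, rfl⟩
    have h1 : S n ≤ ∑' k, θ k := Summable.sum_le_tsum _ (fun i _ => hθ i) hsum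
    have := hφ n
    simp only [neg_le]
    linarith
  have h1 := tendsto_atTop_ciInf hanti hbdd
  have h2 : Tendsto S atTop (𝓝 (∑' k, θ k)) := hsum.hasSum.tendsto_sum_nat
  refine ⟨(⨅ i, φ i - S i) + ∑' k, θ k, ?_⟩
  have h3 := h1.add h2
  have : (fun n => (φ n - S n) + S n) = φ := by funext n; ring
  rwa [this] at h3

lemma aux_sq_to_zero (f : ℕ → ℝ) (hf : ∀ k, 0 ≤ f k)
    (h : Tendsto (fun k => f k ^ 2) atTop (𝓝 0)) : Tendsto f atTop (𝓝 0) := by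
  have h2 := (Real.continuous_sqrt.tendsto 0).comp h
  have e : (Real.sqrt ∘ fun k => f k ^ 2) = f := by
    funext k; simp [Function.comp, Real.sqrt_sq (hf k)]
  rw [e] at h2; simpa using h2

lemma aux_expand {E : Type*} [NormedAddCommGroup E] [InnerProductSpace ℝ E]
    (a d : E) (g : ℝ) :
    ‖a + g • d‖^2 = ‖a‖^2 + g * (‖a‖^2 - ‖a - d‖^2) + (g + g^2) * ‖d‖^2 := by
  have h1 := norm_add_sq_real a (g • d)
  have h2 := norm_sub_sq_real a d
  rw [real_inner_smul_right] at h1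
  have h3 : ‖g • d‖^2 = g^2 * ‖d‖^2 := by
    rw [norm_smul, Real.norm_eq_abs, mul_pow, sq_abs]
  rw [h3] at h1
  have h4 : 2 * (inner ℝ a d : ℝ) = ‖a‖^2 - ‖a - d‖^2 + ‖d‖^2 := by linarith
  linear_combination h1 + g * h4

/-- `T` is an `α`-averaged operator on `ℝ^N` (Euclidean norm). -/
def IsAveragedOp {N : ℕ} (α : ℝ)
    (T : EuclideanSpace ℝ (Fin N) → EuclideanSpace ℝ (Fin N)) : Prop :=
  ∀ x y : EuclideanSpace ℝ (Fin N),
    ‖T x - T y‖ ^ 2 + ((1 - α) / α) * ‖(x - T x) - (y - T y)‖ ^ 2 ≤ ‖x - y‖ ^ 2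

set_option maxHeartbeats 1000000 in
/-- Inertial iterations `x_{k+1} = T(x_k + γ_k (x_k − x_{k−1}))` (with `x_{−1} = x₀`)
converge when `0 ≤ γ_k ≤ γ̄ < 1` and `∑ γ_k ‖x_k − x_{k−1}‖² < ∞`. -/
theorem stmt_1 {N : ℕ} (hN : 1 ≤ N) {α : ℝ} (hα : α ∈ Set.Ioo (0 : ℝ) 1)
    (T : EuclideanSpace ℝ (Fin N) → EuclideanSpace ℝ (Fin N))
    (hT : IsAveragedOp α T) (hfix : ∃ z, T z = z)
    (γ : ℕ → ℝ) (γbar : ℝ) (hγbar : γbar < 1)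
    (hγ : ∀ k, 0 ≤ γ k ∧ γ k ≤ γbar)
    (x₀ : EuclideanSpace ℝ (Fin N)) (x : ℕ → EuclideanSpace ℝ (Fin N))
    (hx0 : x 0 = x₀)
    -- first step, with the convention `x_{-1} = x₀`:
    (hx1 : x 1 = T (x 0 + γ 0 • (x 0 - x 0)))
    (hrec : ∀ k, x (k + 2) = T (x (k + 1) + γ (k + 1) • (x (k + 1) - x k)))
    (hsum : Summable (fun k : ℕ => γ (k + 1) * ‖x (k + 1) - x k‖ ^ 2)) :
    ∃ xbar, T xbar = xbar ∧ Tendsto x atTop (𝓝 xbar) := by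
  obtain ⟨z0, hz0⟩ := hfix
  obtain ⟨hα0, hα1⟩ := hα
  have hcpos : 0 < (1 - α) / α := div_pos (by linarith) hα0
  have hγb0 : 0 ≤ γbar := le_trans (hγ 0).1 (hγ 0).2
  have hγk1 : ∀ k, γ k ≤ 1 := fun k => le_of_lt (lt_of_le_of_lt (hγ k).2 hγbar)
  set xm : ℕ → EuclideanSpace ℝ (Fin N) := fun k => x (k - 1) with hxm
  have hxms : ∀ k, xm (k + 1) = x k := fun k => by simp [hxm]
  set y : ℕ → EuclideanSpace ℝ (Fin N) :=
    fun k => x k + γ k • (x k - xm k) with hy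
  have hTy : ∀ k, x (k + 1) = T (y k) := by
    intro k
    cases k with
    | zero => simpa [hy, hxm] using hx1
    | succ n => rw [hrec n]; simp [hy, hxms]
  -- summability
  have hΔsum : Summable (fun k => γ k * ‖x k - xm k‖ ^ 2) := by
    apply (summable_nat_add_iff 1).1
    simpa [hxms] using hsum
  -- nonexpansiveness
  have hne2 : ∀ a b, ‖T a - T b‖ ^ 2 ≤ ‖a - b‖ ^ 2 := by
    intro a b
    have h := hT a b
    nlinarith [mul_nonneg hcpos.le (sq_nonneg ‖(a - T a) - (b - T b)‖)]
  have hne : ∀ a b, ‖T a - T b‖ ≤ ‖a - b‖ := by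
    intro a b
    nlinarith [hne2 a b, norm_nonneg (T a - T b), norm_nonneg (a - b)]
  have hTcont : Continuous T := by
    have : LipschitzWith 1 T := by
      apply LipschitzWith.of_dist_le_mul
      intro a b
      rw [dist_eq_norm, dist_eq_norm]
      simpa using hne a b
    exact this.continuous
  -- key Fejér-type statement
  have key : ∀ z, T z = z →
      (∃ L, Tendsto (fun k => ‖x k - z‖ ^ 2) atTop (𝓝 L)) ∧
      Tendsto (fun k => ‖y k - z‖ ^ 2 - ‖x (k + 1) - z‖ ^ 2) atTop (𝓝 0) := by
    intro z hz
    set φ : ℕ → ℝ := fun k => ‖x k - z‖ ^ 2 with hφdef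
    set δ : ℕ → ℝ := fun k => 2 * (γ k * ‖x k - xm k‖ ^ 2) with hδdef
    have hφ0 : ∀ k, 0 ≤ φ k := fun k => sq_nonneg _
    have hδ0 : ∀ k, 0 ≤ δ k :=
      fun k => mul_nonneg (by norm_num) (mul_nonneg (hγ k).1 (sq_nonneg _))
    have hδsum : Summable δ := hΔsum.mul_left 2
    have hexp : ∀ k, ‖y k - z‖ ^ 2 ≤ φ k + γ k * (φ k - φ (k - 1)) + δ k := by
      intro k
      have e1 : x k - xm k = (x k - z) - (xm k - z) := by abel
      have e2 : y k - z = (x k - z) + γ k • ((x k - z) - (xm k - z)) := by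
        rw [hy, ← e1]; exact add_sub_right_comm _ _ _
      have e3 : (x k - z) - ((x k - z) - (xm k - z)) = xm k - z := by abel
      have h4 := aux_expand (x k - z) ((x k - z) - (xm k - z)) (γ k)
      rw [e3] at h4
      rw [e2, h4, ← e1]
      have hφm : φ (k - 1) = ‖xm k - z‖ ^ 2 := rfl
      rw [hφm]
      have : (γ k + γ k ^ 2) * ‖x k - xm k‖ ^ 2 ≤ δ k := by
        show (γ k + γ k ^ 2) * ‖x k - xm k‖ ^ 2 ≤ 2 * (γ k * ‖x k - xm k‖ ^ 2)
        nlinarith [mul_nonneg (mul_nonneg (hγ k).1 (by linarith [hγk1 k] : (0:ℝ) ≤ 1 - γ k)) (sq_nonneg ‖x k - xm k‖)]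
      simp only [hφdef]
      linarith
    have hstep : ∀ k, φ (k + 1) - φ k ≤ γ k * (φ k - φ (k - 1)) + δ k := by
      intro k
      have h1 : φ (k + 1) ≤ ‖y k - z‖ ^ 2 := by
        have := hne2 (y k) z
        rw [hz] at this
        simpa [hφdef, hTy k] using this
      linarith [hexp k]
    set θ : ℕ → ℝ := fun k => max (φ (k + 1) - φ k) 0 with hθdef
    have hθ0 : ∀ k, 0 ≤ θ k := fun k => le_max_right _ _
    have hθub : ∀ k, φ (k + 1) - φ k ≤ θ k := fun k => le_max_left _ _
    have hθrec : ∀ k, θ (k + 1) ≤ γbar * θ k + δ (k + 1) := by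
      intro k
      have h1 := hstep (k + 1)
      simp only [Nat.add_sub_cancel] at h1
      have h2 : γ (k + 1) * (φ (k + 1) - φ k) ≤ γbar * θ k := by
        rcases le_or_gt (φ (k + 1) - φ k) 0 with h | h
        · have ha := mul_nonpos_of_nonneg_of_nonpos (hγ (k + 1)).1 h
          nlinarith [mul_nonneg hγb0 (hθ0 k)]
        · have h3 : φ (k + 1) - φ k ≤ θ k := hθub k
          nlinarith [hθ0 k, (hγ (k + 1)).1, (hγ (k + 1)).2]
      have h4 : θ (k + 1) = max (φ (k + 2) - φ (k + 1)) 0 := rfl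
      rw [h4]
      apply max_le
      · linarith
      · exact add_nonneg (mul_nonneg hγb0 (hθ0 k)) (hδ0 _)
    have hθsum : Summable θ :=
      aux_summable_rec γbar hγb0 hγbar θ (fun k => δ (k + 1)) hθ0
        (fun k => hδ0 (k + 1)) ((summable_nat_add_iff 1).2 hδsum) hθrec
    obtain ⟨L, hL⟩ := aux_tendsto_of_diff φ θ hφ0 hθ0 hθub hθsum
    refine ⟨⟨L, hL⟩, ?_⟩
    -- squeeze
    have hLs : Tendsto (fun k => φ (k + 1)) atTop (𝓝 L) :=
      hL.comp (tendsto_add_atTop_nat 1)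
    have hLm : Tendsto (fun k => φ (k - 1)) atTop (𝓝 L) :=
      hL.comp (tendsto_sub_atTop_nat 1)
    have hu1 : Tendsto (fun k => φ k - φ (k + 1)) atTop (𝓝 0) := by
      simpa using hL.sub hLs
    have hu2 : Tendsto (fun k => γ k * (φ k - φ (k - 1))) atTop (𝓝 0) := by
      have ht : Tendsto (fun k => γbar * |φ k - φ (k - 1)|) atTop (𝓝 0) := by
        have h5 : Tendsto (fun k => φ k - φ (k - 1)) atTop (𝓝 0) := by
          simpa using hL.sub hLm
        simpa using (h5.abs.const_mul γbar)
      refine squeeze_zero_norm (fun k => ?_) ht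
      rw [Real.norm_eq_abs, abs_mul, abs_of_nonneg (hγ k).1]
      exact mul_le_mul_of_nonneg_right (hγ k).2 (abs_nonneg _)
    have hu3 : Tendsto δ atTop (𝓝 0) := hδsum.tendsto_atTop_zero
    have husum : Tendsto
        (fun k => (φ k - φ (k + 1)) + γ k * (φ k - φ (k - 1)) + δ k) atTop (𝓝 0) := by
      simpa using (hu1.add hu2).add hu3
    apply squeeze_zero (g := fun k => (φ k - φ (k + 1)) + γ k * (φ k - φ (k - 1)) + δ k)
    · intro k
      have h1 : φ (k + 1) ≤ ‖y k - z‖ ^ 2 := by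
        have := hne2 (y k) z
        rw [hz] at this
        simpa [hφdef, hTy k] using this
      simpa [hφdef] using sub_nonneg.2 h1
    · intro k
      have := hexp k
      simp only [hφdef] at this ⊢
      linarith
    · exact husum
  obtain ⟨⟨L0, hL0⟩, hgap⟩ := key z0 hz0
  -- residual tends to zero
  have hres : Tendsto (fun k => y k - T (y k)) atTop (𝓝 0) := by
    have hb : ∀ k, ((1 - α) / α) * ‖y k - T (y k)‖ ^ 2
        ≤ ‖y k - z0‖ ^ 2 - ‖x (k + 1) - z0‖ ^ 2 := by
      intro k
      have h := hT (y k) z0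
      rw [hz0, sub_self, sub_zero] at h
      rw [hTy k]
      linarith
    have hsq : Tendsto (fun k => ‖y k - T (y k)‖ ^ 2) atTop (𝓝 0) := by
      apply squeeze_zero (g := fun k => (α / (1 - α)) * (‖y k - z0‖ ^ 2 - ‖x (k + 1) - z0‖ ^ 2))
      · intro k; positivity
      · intro k
        have hnn : 0 ≤ α / (1 - α) := div_nonneg hα0.le (by linarith)
        have hne1 : α ≠ 0 := ne_of_gt hα0
        have hne2' : (1:ℝ) - α ≠ 0 := ne_of_gt (by linarith)
        calc ‖y k - T (y k)‖ ^ 2 = (α / (1 - α)) * (((1 - α) / α) * ‖y k - T (y k)‖ ^ 2) := by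
              field_simp
          _ ≤ (α / (1 - α)) * (‖y k - z0‖ ^ 2 - ‖x (k + 1) - z0‖ ^ 2) :=
              mul_le_mul_of_nonneg_left (hb k) hnn
      · simpa using hgap.const_mul (α / (1 - α))
    have hn : Tendsto (fun k => ‖y k - T (y k)‖) atTop (𝓝 0) :=
      aux_sq_to_zero _ (fun k => norm_nonneg _) hsq
    exact tendsto_zero_iff_norm_tendsto_zero.2 hn
  -- inertial term tends to zero
  have hγΔ : Tendsto (fun k => γ k • (x k - xm k)) atTop (𝓝 0) := by
    have hsq : Tendsto (fun k => (γ k * ‖x k - xm k‖) ^ 2) atTop (𝓝 0) := by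
      apply squeeze_zero (g := fun k => γbar * (γ k * ‖x k - xm k‖ ^ 2))
      · intro k; positivity
      · intro k
        have h1 := (hγ k).1
        have h2 := (hγ k).2
        nlinarith [mul_nonneg (mul_nonneg (by linarith : (0:ℝ) ≤ γbar - γ k) h1) (sq_nonneg ‖x k - xm k‖)]
      · simpa using hΔsum.tendsto_atTop_zero.const_mul γbar
    have hn : Tendsto (fun k => γ k * ‖x k - xm k‖) atTop (𝓝 0) :=
      aux_sq_to_zero _ (fun k => mul_nonneg (hγ k).1 (norm_nonneg _)) hsq
    refine squeeze_zero_norm (fun k => ?_) hn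
    rw [norm_smul, Real.norm_eq_abs, abs_of_nonneg (hγ k).1]
  -- boundedness and convergent subsequence
  obtain ⟨C, hC⟩ := hL0.bddAbove_range
  have hCub : ∀ k, ‖x k - z0‖ ^ 2 ≤ C := fun k => hC ⟨k, rfl⟩
  have hxball : ∀ k, x k ∈ Metric.closedBall z0 (Real.sqrt C) := by
    intro k
    rw [Metric.mem_closedBall, dist_eq_norm]
    have h1 := hCub k
    have h2 : 0 ≤ C := le_trans (sq_nonneg _) h1
    nlinarith [Real.sq_sqrt h2, Real.sqrt_nonneg C, norm_nonneg (x k - z0)]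
  obtain ⟨xbar, -, ψ, hψmono, hψtend⟩ :=
    tendsto_subseq_of_bounded (Metric.isBounded_closedBall (x := z0) (r := Real.sqrt C)) hxball
  -- the limit is a fixed point
  have hyψ : Tendsto (fun j => y (ψ j)) atTop (𝓝 xbar) := by
    have h := hψtend.add (hγΔ.comp hψmono.tendsto_atTop)
    simpa [hy, Function.comp] using h
  have hTyψ : Tendsto (fun j => T (y (ψ j))) atTop (𝓝 xbar) := by
    have h := hyψ.sub (hres.comp hψmono.tendsto_atTop)
    simpa [Function.comp, sub_sub_cancel] using h
  have hTxbar : T xbar = xbar :=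
    tendsto_nhds_unique ((hTcont.tendsto xbar).comp hyψ) hTyψ
  -- conclude convergence of the whole sequence
  obtain ⟨⟨L1, hL1⟩, -⟩ := key xbar hTxbar
  have hsub : Tendsto (fun j => ‖x (ψ j) - xbar‖ ^ 2) atTop (𝓝 0) := by
    have h1 : Tendsto (fun j => x (ψ j) - xbar) atTop (𝓝 0) := by
      simpa using hψtend.sub_const xbar
    simpa using h1.norm.pow 2
  have hL1eq : L1 = 0 :=
    tendsto_nhds_unique (hL1.comp hψmono.tendsto_atTop) hsub
  have hxn : Tendsto (fun k => ‖x k - xbar‖) atTop (𝓝 0) :=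
    aux_sq_to_zero _ (fun k => norm_nonneg _) (hL1eq ▸ hL1)
  exact ⟨xbar, hTxbar, tendsto_iff_norm_sub_tendsto_zero.2 hxn⟩
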